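/- Let τ be an indeterminate, and for integers k ≥ 1, k' ≥ 0 and ℓ, m ≥ 1 define T_{ℓm}(k,k') := Σ_{r≥0} C(ℓ+k−1, 2m−ℓ−r)·C(m+k', r)·τ^{2r} in ℤ[τ], where C(a,b) is the binomial coefficient (0 if b < 0 or b > a), and set T_{ℓ,0}(k,k') := Σ_{r≥0} C(ℓ+k−1, −ℓ−r)·C(k', r)·τ^{2r} (which is 0 for ℓ ≥ 1). Then for all integers ℓ ≥ 1, m ≥ 1, k ≥ 1 and k' ≥ 1: T_{ℓm}(k, k'−1) + τ²·T_{ℓ+1,m}(k, k'−1) = T_{ℓm}(k, k') + τ²·T_{ℓ,m−1}(k, k'). -/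
import Mathlib


open Polynomial Finset

/-- Binomial coefficient `C(a,b)` for integer arguments, equal to `0` if `b < 0` or `b > a`
    (for `a ≥ 0`). -/
def intChoose (a b : ℤ) : ℤ := if 0 ≤ b then (a.toNat.choose b.toNat : ℤ) else 0

/-- The matrix entry `T_{ℓm}(k,k') = ∑_{r ≥ 0} C(ℓ+k-1, 2m-ℓ-r) C(m+k', r) τ^{2r}` in `ℤ[τ]`.
    (The sum over `r ≥ 0` is finite; all terms with `r > 2m` vanish since then
    `2m - ℓ - r < 0` for `ℓ ≥ 1`.) -/
noncomputable def Tent (k k' ℓ m : ℤ) : Polynomial ℤ :=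
  ∑ r ∈ Finset.range ((2 * m).toNat + 1),
    Polynomial.C (intChoose (ℓ + k - 1) (2 * m - ℓ - (r : ℤ)) * intChoose (m + k') (r : ℤ)) *
      Polynomial.X ^ (2 * r)

lemma intChoose_neg (a b : ℤ) (hb : b < 0) : intChoose a b = 0 := by
  unfold intChoose; rw [if_neg (by omega)]

lemma intChoose_pascal (a b : ℤ) (ha : 0 ≤ a) :
    intChoose (a + 1) b = intChoose a b + intChoose a (b - 1) := by
  unfold intChoose
  rcases lt_trichotomy b 0 with h | h | h
  · rw [if_neg (by omega), if_neg (by omega), if_neg (by omega)]; ring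
  · subst h; simp
  · rw [if_pos (by omega), if_pos (by omega), if_pos (by omega)]
    have h1 : (a + 1).toNat = a.toNat + 1 := by omega
    have h2 : b.toNat = (b - 1).toNat + 1 := by omega
    rw [h1, h2, Nat.choose_succ_succ, Nat.succ_eq_add_one, ← h2]
    push_cast; ring

lemma Tent_eq (k k' ℓ m : ℤ) (hℓ : 1 ≤ ℓ) (M : ℕ) (hM : (2 * m).toNat + 1 ≤ M) :
    Tent k k' ℓ m = ∑ r ∈ Finset.range M,
      Polynomial.C (intChoose (ℓ + k - 1) (2 * m - ℓ - (r : ℤ)) * intChoose (m + k') (r : ℤ)) *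
        Polynomial.X ^ (2 * r) := by
  unfold Tent
  apply Finset.sum_subset (Finset.range_subset_range.2 hM)
  intro r hrM hr
  simp only [Finset.mem_range, not_lt] at hr
  have hr' : 2 * m - ℓ - (r : ℤ) < 0 := by omega
  rw [intChoose_neg _ _ hr', zero_mul, map_zero, zero_mul]

lemma shift (c : ℤ → ℤ) (R : ℕ) (h0 : c (-1) = 0) :
    Polynomial.X ^ 2 * ∑ r ∈ Finset.range R, Polynomial.C (c (r : ℤ)) * Polynomial.X ^ (2 * r) =
      ∑ r ∈ Finset.range (R + 1),
        Polynomial.C (c ((r : ℤ) - 1)) * Polynomial.X ^ (2 * r) := by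
  rw [Finset.sum_range_succ', Finset.mul_sum]
  have h00 : Polynomial.C (c (((0 : ℕ) : ℤ) - 1)) * Polynomial.X ^ (2 * 0) = 0 := by
    norm_num
    exact h0
  rw [h00, add_zero]
  apply Finset.sum_congr rfl
  intro i _
  rw [show ((i + 1 : ℕ) : ℤ) - 1 = (i : ℤ) by push_cast; ring]
  ring

lemma shiftT (k k' ℓ m : ℤ) (hℓ : 1 ≤ ℓ) (N : ℕ) (h : (2 * m).toNat + 1 ≤ N + 1) :
    Polynomial.X ^ 2 * Tent k k' ℓ m = ∑ r ∈ Finset.range (N + 2),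
      Polynomial.C (intChoose (ℓ + k - 1) (2 * m - ℓ - ((r : ℤ) - 1)) *
          intChoose (m + k') ((r : ℤ) - 1)) * Polynomial.X ^ (2 * r) := by
  rw [Tent_eq k k' ℓ m hℓ (N + 1) h]
  exact shift (fun x => intChoose (ℓ + k - 1) (2 * m - ℓ - x) * intChoose (m + k') x) (N + 1)
    (by show intChoose (ℓ + k - 1) (2 * m - ℓ - (-1)) * intChoose (m + k') (-1) = 0
        rw [intChoose_neg (m + k') (-1) (by omega), mul_zero])

/-- The entrywise Pascal-rule identity:
    `T_{ℓm}(k,k'-1) + τ² T_{ℓ+1,m}(k,k'-1) = T_{ℓm}(k,k') + τ² T_{ℓ,m-1}(k,k')`. -/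
theorem Tent_pascal (ℓ m k k' : ℤ) (hℓ : 1 ≤ ℓ) (hm : 1 ≤ m) (hk : 1 ≤ k) (hk' : 1 ≤ k') :
    Tent k (k' - 1) ℓ m + Polynomial.X ^ 2 * Tent k (k' - 1) (ℓ + 1) m =
      Tent k k' ℓ m + Polynomial.X ^ 2 * Tent k k' ℓ (m - 1) := by
  set N := (2 * m).toNat with hN
  have hN2 : (2 * m).toNat + 1 ≤ N + 2 := by omega
  have hN1 : (2 * m).toNat + 1 ≤ N + 1 := by omega
  have hN1' : (2 * (m - 1)).toNat + 1 ≤ N + 1 := by omega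
  rw [Tent_eq k (k' - 1) ℓ m hℓ (N + 2) hN2,
      shiftT k (k' - 1) (ℓ + 1) m (by omega) N hN1,
      Tent_eq k k' ℓ m hℓ (N + 2) hN2,
      shiftT k k' ℓ (m - 1) hℓ N hN1',
      ← Finset.sum_add_distrib, ← Finset.sum_add_distrib]
  apply Finset.sum_congr rfl
  intro r _
  rw [← add_mul, ← add_mul, ← Polynomial.C_add, ← Polynomial.C_add]
  congr 2
  set x := (r : ℤ) with hx
  have h1 := intChoose_pascal (ℓ + k - 1) (2 * m - ℓ - x) (by omega)
  have h2 := intChoose_pascal (m + k' - 1) x (by omega)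
  have e1 : ℓ + 1 + k - 1 = ℓ + k - 1 + 1 := by ring
  have e2 : 2 * m - (ℓ + 1) - (x - 1) = 2 * m - ℓ - x := by ring
  have e3 : m + (k' - 1) = m + k' - 1 := by ring
  have e4 : 2 * (m - 1) - ℓ - (x - 1) = 2 * m - ℓ - x - 1 := by ring
  have e5 : m - 1 + k' = m + k' - 1 := by ring
  have e6 : m + k' = m + k' - 1 + 1 := by ring
  rw [e1, e2, e3, e4, e5, e6, h1, h2]
  ring
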